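/- arXiv:2605.28967 — 4 statements merged into one kernel-verified Lean document; each statement's English description precedes it below -/
import Mathlib

section
/- Let ρ be a density matrix on a bipartite finite-dimensional system H_A ⊗ H_B and let O be a matrix acting on H_A. Then the one-point fidelity correlator does not increase when the region is enlarged: F(Tr_B ρ, O (Tr_B ρ) O†) ≥ F(ρ, (O ⊗ 1_B) ρ (O ⊗ 1_B)†). -/
noncomputable section

open scoped Matrix Kronecker ComplexOrder

/-- The positive semidefinite square root of a matrix (defaults to `0` if not PSD). -/
noncomputable def matSqrt {n : Type*} [Fintype n] [DecidableEq n] (M : Matrix n n ℂ) :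
    Matrix n n ℂ :=
  open scoped Classical in
  if h : M.PosSemidef then
    (h.1.eigenvectorUnitary : Matrix n n ℂ) * Matrix.diagonal ((↑) ∘ (√·) ∘ h.1.eigenvalues) *
      (star h.1.eigenvectorUnitary : Matrix n n ℂ)
  else 0

/-- The fidelity `F(ρ, σ) = tr √(√ρ σ √ρ)` of two PSD matrices. -/
noncomputable def fidelity {n : Type*} [Fintype n] [DecidableEq n] (ρ σ : Matrix n n ℂ) : ℝ :=
  (matSqrt (matSqrt ρ * σ * matSqrt ρ)).trace.re

/-- The ℓ²→ℓ² operator norm of a complex matrix. -/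
noncomputable def opNorm {m n : Type*} [Fintype m] [Fintype n] [DecidableEq n]
    (M : Matrix m n ℂ) : ℝ :=
  ‖(Matrix.toEuclideanLin.trans LinearMap.toContinuousLinearMap) M‖

/-- Partial trace over the second tensor factor. -/
noncomputable def ptraceB {A B : Type*} [Fintype B]
    (ρ : Matrix (A × B) (A × B) ℂ) : Matrix A A ℂ :=
  Matrix.of fun a a' => ∑ b : B, ρ (a, b) (a', b)

set_option linter.unusedSectionVars false
set_option maxHeartbeats 1000000

namespace FidAux
open Matrix Complex

variable {n m : Type*} [Fintype n] [DecidableEq n] [Fintype m] [DecidableEq m]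
variable {A B : Type*} [Fintype A] [DecidableEq A] [Fintype B] [DecidableEq B]

lemma matSqrt_eq {M : Matrix n n ℂ} (h : M.PosSemidef) : matSqrt M =
    (h.1.eigenvectorUnitary : Matrix n n ℂ) * Matrix.diagonal ((↑) ∘ (√·) ∘ h.1.eigenvalues) *
      (star h.1.eigenvectorUnitary : Matrix n n ℂ) := by
  unfold matSqrt; rw [dif_pos h]

lemma matSqrt_posSemidef {M : Matrix n n ℂ} (h : M.PosSemidef) : (matSqrt M).PosSemidef := by
  rw [matSqrt_eq h]
  apply Matrix.PosSemidef.mul_mul_conjTranspose_same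
  refine Matrix.posSemidef_diagonal_iff.mpr fun i => ?_
  rw [Complex.nonneg_iff]
  exact ⟨by simpa using Real.sqrt_nonneg _, by simp⟩

lemma matSqrt_mul_self {M : Matrix n n ℂ} (h : M.PosSemidef) : matSqrt M * matSqrt M = M := by
  rw [matSqrt_eq h]
  set U := (h.1.eigenvectorUnitary : Matrix n n ℂ)
  have hU : (star h.1.eigenvectorUnitary : Matrix n n ℂ) * U = 1 :=
    Matrix.mem_unitaryGroup_iff'.mp h.1.eigenvectorUnitary.2
  have hD : Matrix.diagonal ((↑) ∘ (√·) ∘ h.1.eigenvalues : n → ℂ) *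
      Matrix.diagonal ((↑) ∘ (√·) ∘ h.1.eigenvalues) =
      Matrix.diagonal (Complex.ofReal ∘ h.1.eigenvalues) := by
    rw [Matrix.diagonal_mul_diagonal]; congr 1; funext i
    simp only [Function.comp_apply]
    rw [← Complex.ofReal_mul, Real.mul_self_sqrt (h.eigenvalues_nonneg i)]
  have hs : M = U * Matrix.diagonal (Complex.ofReal ∘ h.1.eigenvalues) *
      (star h.1.eigenvectorUnitary : Matrix n n ℂ) := h.1.spectral_theorem
  conv_rhs => rw [hs]
  rw [show U * Matrix.diagonal ((↑) ∘ (√·) ∘ h.1.eigenvalues : n → ℂ) *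
      (star h.1.eigenvectorUnitary : Matrix n n ℂ) *
      (U * Matrix.diagonal ((↑) ∘ (√·) ∘ h.1.eigenvalues : n → ℂ) *
      (star h.1.eigenvectorUnitary : Matrix n n ℂ)) =
      U * (Matrix.diagonal ((↑) ∘ (√·) ∘ h.1.eigenvalues : n → ℂ) *
      ((star h.1.eigenvectorUnitary : Matrix n n ℂ) * U) *
      Matrix.diagonal ((↑) ∘ (√·) ∘ h.1.eigenvalues : n → ℂ)) *
      (star h.1.eigenvectorUnitary : Matrix n n ℂ) by simp only [Matrix.mul_assoc]]
  rw [hU, Matrix.mul_one, hD]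

lemma matSqrt_herm {M : Matrix n n ℂ} (h : M.PosSemidef) : (matSqrt M)ᴴ = matSqrt M :=
  (matSqrt_posSemidef h).1

lemma diag_nonneg {M : Matrix n n ℂ} (h : M.PosSemidef) (i : n) : 0 ≤ (M i i).re := by
  exact (Complex.nonneg_iff.mp h.diag_nonneg).1

lemma re_trace_nonneg {M : Matrix n n ℂ} (h : M.PosSemidef) : 0 ≤ M.trace.re := by
  rw [Matrix.trace, Complex.re_sum]
  exact Finset.sum_nonneg fun i _ => diag_nonneg h i


lemma eq_zero_of_trace_mul_conjTranspose {Z : Matrix m n ℂ} (h : (Z * Zᴴ).trace = 0) :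
    Z = 0 := by
  have ht : (Z * Zᴴ).trace = ((∑ i, ∑ j, Complex.normSq (Z i j) : ℝ) : ℂ) := by
    rw [Matrix.trace]
    simp only [Matrix.diag_apply, Matrix.mul_apply, Matrix.conjTranspose_apply]
    push_cast
    congr 1; ext i; congr 1; ext j
    rw [show (star (Z i j)) = (starRingEnd ℂ) (Z i j) from rfl, mul_comm,
      ← Complex.normSq_eq_conj_mul_self]
  rw [ht] at h
  have h0 : (∑ i, ∑ j, Complex.normSq (Z i j) : ℝ) = 0 := by exact_mod_cast h
  ext i j
  have : ∀ i ∈ (Finset.univ : Finset m), (0:ℝ) ≤ ∑ j, Complex.normSq (Z i j) :=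
    fun i _ => Finset.sum_nonneg fun j _ => Complex.normSq_nonneg _
  have hi := (Finset.sum_eq_zero_iff_of_nonneg this).mp h0 i (Finset.mem_univ i)
  have hj := (Finset.sum_eq_zero_iff_of_nonneg
    (fun j _ => Complex.normSq_nonneg (Z i j))).mp hi j (Finset.mem_univ j)
  simpa using Complex.normSq_eq_zero.mp hj

def cdiag (U : Matrix n n ℂ) (f : n → ℝ) : Matrix n n ℂ :=
  U * Matrix.diagonal (Complex.ofReal ∘ f) * Uᴴ

lemma cdiag_mul {U : Matrix n n ℂ} (hU : Uᴴ * U = 1) (f g : n → ℝ) :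
    cdiag U f * cdiag U g = cdiag U (fun i => f i * g i) := by
  unfold cdiag
  have : U * Matrix.diagonal (Complex.ofReal ∘ f) * Uᴴ * (U * Matrix.diagonal (Complex.ofReal ∘ g) * Uᴴ)
      = U * (Matrix.diagonal (Complex.ofReal ∘ f) * (Uᴴ * U) * Matrix.diagonal (Complex.ofReal ∘ g)) * Uᴴ := by
    simp only [Matrix.mul_assoc]
  rw [this, hU, Matrix.mul_one, Matrix.diagonal_mul_diagonal]
  congr 2
  funext i j
  by_cases h : i = j <;> simp [Matrix.diagonal_apply, h]

lemma cdiag_herm (U : Matrix n n ℂ) (f : n → ℝ) : (cdiag U f)ᴴ = cdiag U f := by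
  unfold cdiag
  rw [Matrix.conjTranspose_mul, Matrix.conjTranspose_mul, Matrix.diagonal_conjTranspose,
    Matrix.conjTranspose_conjTranspose, Matrix.mul_assoc]
  congr 2
  funext i j
  by_cases h : i = j <;> simp [Matrix.diagonal_apply, h, Pi.star_def]

lemma cdiag_posSemidef (U : Matrix n n ℂ) {f : n → ℝ} (hf : ∀ i, 0 ≤ f i) :
    (cdiag U f).PosSemidef := by
  apply Matrix.PosSemidef.mul_mul_conjTranspose_same
  refine Matrix.posSemidef_diagonal_iff.mpr fun i => ?_
  rw [Complex.nonneg_iff]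
  exact ⟨by simpa using hf i, by simp⟩

lemma cdiag_sub (U : Matrix n n ℂ) (f g : n → ℝ) :
    cdiag U f - cdiag U g = cdiag U (fun i => f i - g i) := by
  unfold cdiag
  rw [← Matrix.sub_mul, ← Matrix.mul_sub, Matrix.diagonal_sub]
  congr 2
  funext i j
  by_cases h : i = j <;> simp [Matrix.diagonal_apply, h]

lemma cdiag_one {U : Matrix n n ℂ} (hU : U * Uᴴ = 1) : cdiag U (fun _ => 1) = 1 := by
  unfold cdiag
  have : Matrix.diagonal (Complex.ofReal ∘ fun _ : n => (1:ℝ)) = 1 := by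
    ext i j; by_cases h : i = j <;> simp [Matrix.diagonal, Matrix.one_apply, h]
  rw [this, Matrix.mul_one, hU]

lemma cdiag_zero (U : Matrix n n ℂ) : cdiag U (fun _ => 0) = 0 := by
  unfold cdiag
  have : Matrix.diagonal (Complex.ofReal ∘ fun _ : n => (0:ℝ)) = 0 := by
    ext i j; by_cases h : i = j <;> simp [Matrix.diagonal, h]
  rw [this, Matrix.mul_zero, Matrix.zero_mul]

lemma cdiag_eq_of_eq (U : Matrix n n ℂ) {f g : n → ℝ} (h : ∀ i, f i = g i) :
    cdiag U f = cdiag U g := by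
  unfold cdiag; congr 2; funext i j
  by_cases hij : i = j <;> simp [Matrix.diagonal_apply, hij, h]


lemma pinv_arith {lam : n → ℝ} (hlam0 : ∀ i, 0 ≤ lam i) :
    ∀ i, (if lam i = 0 then 0 else (Real.sqrt (lam i))⁻¹) * lam i = Real.sqrt (lam i) := by
  intro i
  by_cases hi : lam i = 0
  · simp [hi]
  · have hpos : 0 < lam i := lt_of_le_of_ne (hlam0 i) (Ne.symm hi)
    have hsq : Real.sqrt (lam i) ≠ 0 := by rw [Real.sqrt_ne_zero']; exact hpos
    rw [if_neg hi, inv_mul_eq_div, div_eq_iff hsq]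
    exact (Real.mul_self_sqrt (hlam0 i)).symm

lemma sqrt_pinv_arith {lam : n → ℝ} (hlam0 : ∀ i, 0 ≤ lam i) :
    ∀ i, Real.sqrt (lam i) * (if lam i = 0 then 0 else (Real.sqrt (lam i))⁻¹)
      = (if lam i = 0 then 0 else 1) := by
  intro i
  by_cases hi : lam i = 0
  · simp [hi]
  · have hpos : 0 < lam i := lt_of_le_of_ne (hlam0 i) (Ne.symm hi)
    have hsq : Real.sqrt (lam i) ≠ 0 := by rw [Real.sqrt_ne_zero']; exact hpos
    rw [if_neg hi, if_neg hi, mul_inv_cancel₀ hsq]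

/-- Polar decomposition. -/
lemma exists_polar (Y : Matrix n n ℂ) :
    ∃ W : Matrix n n ℂ, (1 - Wᴴ * W).PosSemidef ∧ Wᴴ * Y = matSqrt (Yᴴ * Y) ∧
      W * matSqrt (Yᴴ * Y) = Y := by
  have h : (Yᴴ * Y).PosSemidef := Matrix.posSemidef_conjTranspose_mul_self Y
  set U : Matrix n n ℂ := (h.1.eigenvectorUnitary : Matrix n n ℂ) with hUdef
  have hU1 : Uᴴ * U = 1 := by
    rw [← Matrix.star_eq_conjTranspose]
    exact Matrix.mem_unitaryGroup_iff'.mp h.1.eigenvectorUnitary.2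
  have hU2 : U * Uᴴ = 1 := by
    rw [← Matrix.star_eq_conjTranspose]
    exact Matrix.mem_unitaryGroup_iff.mp h.1.eigenvectorUnitary.2
  set lam : n → ℝ := h.1.eigenvalues with hlam
  have hlam0 : ∀ i, 0 ≤ lam i := h.eigenvalues_nonneg
  have hspec : Yᴴ * Y = cdiag U lam := h.1.spectral_theorem
  have hsqrt : matSqrt (Yᴴ * Y) = cdiag U (fun i => Real.sqrt (lam i)) := by
    rw [matSqrt_eq h]; rfl
  set p : n → ℝ := fun i => if lam i = 0 then 0 else (Real.sqrt (lam i))⁻¹ with hp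
  set s : n → ℝ := fun i => if lam i = 0 then 0 else 1 with hs
  refine ⟨Y * cdiag U p, ?_, ?_, ?_⟩
  · have hWW : (Y * cdiag U p)ᴴ * (Y * cdiag U p) = cdiag U s := by
      rw [Matrix.conjTranspose_mul, cdiag_herm]
      have : cdiag U p * Yᴴ * (Y * cdiag U p) = cdiag U p * (Yᴴ * Y) * cdiag U p := by
        simp only [Matrix.mul_assoc]
      rw [this, hspec, cdiag_mul hU1, cdiag_mul hU1]
      apply cdiag_eq_of_eq
      intro i
      show p i * lam i * p i = s i
      rw [pinv_arith hlam0 i, sqrt_pinv_arith hlam0 i]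
    rw [hWW, ← cdiag_one hU2, cdiag_sub]
    apply cdiag_posSemidef
    intro i
    by_cases hi : lam i = 0 <;> simp [hs, hi]
  · rw [Matrix.conjTranspose_mul, cdiag_herm, Matrix.mul_assoc, hsqrt, hspec, cdiag_mul hU1]
    apply cdiag_eq_of_eq
    intro i
    exact pinv_arith hlam0 i
  · rw [hsqrt, Matrix.mul_assoc, cdiag_mul hU1]
    have h1 : (fun i => p i * Real.sqrt (lam i)) = s := by
      funext i
      rw [mul_comm]
      exact sqrt_pinv_arith hlam0 i
    rw [h1]
    -- show Y * cdiag U s = Y, i.e. Y * cdiag U (1 - s) = 0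
    have key : Y * cdiag U (fun i => 1 - s i) = 0 := by
      apply eq_zero_of_trace_mul_conjTranspose
      rw [Matrix.conjTranspose_mul, cdiag_herm]
      have : Y * cdiag U (fun i => 1 - s i) * (cdiag U (fun i => 1 - s i) * Yᴴ)
          = Y * (cdiag U (fun i => 1 - s i) * cdiag U (fun i => 1 - s i)) * Yᴴ := by
        simp only [Matrix.mul_assoc]
      rw [this, cdiag_mul hU1]
      rw [Matrix.trace_mul_cycle, hspec, cdiag_mul hU1]
      have : cdiag U (fun i => lam i * ((1 - s i) * (1 - s i))) = 0 := by
        rw [← cdiag_zero U]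
        apply cdiag_eq_of_eq
        intro i
        by_cases hi : lam i = 0 <;> simp [hs, hi]
      rw [this, Matrix.trace_zero]
    have expand : Y * cdiag U (fun i => 1 - s i) = Y - Y * cdiag U s := by
      rw [← cdiag_sub U (fun _ => 1) s, Matrix.mul_sub, cdiag_one hU2, Matrix.mul_one]
    rw [expand] at key
    exact (sub_eq_zero.mp key).symm

/-- Pseudo-inverse package for the square root of a PSD matrix. -/
lemma exists_pinv {M : Matrix n n ℂ} (hM : M.PosSemidef) :
    ∃ Rp P : Matrix n n ℂ, Rpᴴ = Rp ∧ Pᴴ = P ∧ (1 - P).PosSemidef ∧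
      matSqrt M * Rp = P ∧ Rp * matSqrt M = P ∧ P * matSqrt M = matSqrt M ∧
      matSqrt M * P = matSqrt M ∧ Rp * M * Rp = P := by
  set U : Matrix n n ℂ := (hM.1.eigenvectorUnitary : Matrix n n ℂ) with hUdef
  have hU1 : Uᴴ * U = 1 := by
    rw [← Matrix.star_eq_conjTranspose]
    exact Matrix.mem_unitaryGroup_iff'.mp hM.1.eigenvectorUnitary.2
  have hU2 : U * Uᴴ = 1 := by
    rw [← Matrix.star_eq_conjTranspose]
    exact Matrix.mem_unitaryGroup_iff.mp hM.1.eigenvectorUnitary.2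
  set lam : n → ℝ := hM.1.eigenvalues with hlam
  have hlam0 : ∀ i, 0 ≤ lam i := hM.eigenvalues_nonneg
  have hspec : M = cdiag U lam := hM.1.spectral_theorem
  have hsqrt : matSqrt M = cdiag U (fun i => Real.sqrt (lam i)) := by
    rw [matSqrt_eq hM]; rfl
  set p : n → ℝ := fun i => if lam i = 0 then 0 else (Real.sqrt (lam i))⁻¹ with hp
  set s : n → ℝ := fun i => if lam i = 0 then 0 else 1 with hs
  have hsqp : ∀ i, Real.sqrt (lam i) * p i = s i := sqrt_pinv_arith hlam0
  refine ⟨cdiag U p, cdiag U s, cdiag_herm U p, cdiag_herm U s, ?_, ?_, ?_, ?_, ?_, ?_⟩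
  · rw [← cdiag_one hU2, cdiag_sub]
    apply cdiag_posSemidef
    intro i
    by_cases hi : lam i = 0 <;> simp [hs, hi]
  · rw [hsqrt, cdiag_mul hU1]
    exact cdiag_eq_of_eq U hsqp
  · rw [hsqrt, cdiag_mul hU1]
    exact cdiag_eq_of_eq U (fun i => by rw [mul_comm]; exact hsqp i)
  · rw [hsqrt, cdiag_mul hU1]
    apply cdiag_eq_of_eq
    intro i
    by_cases hi : lam i = 0 <;> simp [hs, hi]
  · rw [hsqrt, cdiag_mul hU1]
    apply cdiag_eq_of_eq
    intro i
    by_cases hi : lam i = 0 <;> simp [hs, hi]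
  · rw [hspec, cdiag_mul hU1, cdiag_mul hU1]
    apply cdiag_eq_of_eq
    intro i
    show p i * lam i * p i = s i
    rw [pinv_arith hlam0 i, sqrt_pinv_arith hlam0 i]


/-- The isometry embedding `H_A → H_A ⊗ H_B` given by `x ↦ x ⊗ e_b`. -/
def embE (b : B) : Matrix (A × B) A ℂ :=
  Matrix.of fun p a => if p = (a, b) then 1 else 0

lemma posSemidef_sum {ι : Type*} (s : Finset ι) (f : ι → Matrix n n ℂ)
    (h : ∀ i ∈ s, (f i).PosSemidef) : (∑ i ∈ s, f i).PosSemidef := by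
  classical
  induction s using Finset.induction with
  | empty => simpa using Matrix.PosSemidef.zero
  | insert _ _ hx ih =>
    rw [Finset.sum_insert hx]
    exact ((h _ (Finset.mem_insert_self _ _)).add
      (ih fun i hi => h i (Finset.mem_insert_of_mem hi)))

lemma ptraceB_eq_sum_conj (T : Matrix (A × B) (A × B) ℂ) :
    ptraceB T = ∑ b : B, (embE b : Matrix (A × B) A ℂ)ᴴ * T * (embE b : Matrix (A × B) A ℂ) := by
  ext a a'
  simp only [ptraceB, Matrix.of_apply, Matrix.sum_apply, Matrix.mul_apply,
    Matrix.conjTranspose_apply, embE]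
  congr 1
  ext b
  simp [apply_ite (star : ℂ → ℂ), ite_mul, mul_ite, Finset.sum_ite_eq, Finset.sum_ite_eq']

lemma ptraceB_posSemidef {ρ : Matrix (A × B) (A × B) ℂ} (h : ρ.PosSemidef) :
    (ptraceB ρ).PosSemidef := by
  rw [ptraceB_eq_sum_conj]
  exact posSemidef_sum _ _ fun b _ => h.conjTranspose_mul_mul_same (embE b)

lemma ptraceB_conjTranspose (T : Matrix (A × B) (A × B) ℂ) :
    ptraceB Tᴴ = (ptraceB T)ᴴ := by
  ext a a'
  simp only [ptraceB, Matrix.of_apply, Matrix.conjTranspose_apply]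
  rw [star_sum]

lemma ptraceB_mul_kron (T : Matrix (A × B) (A × B) ℂ) (X : Matrix A A ℂ) :
    ptraceB (T * (X ⊗ₖ (1 : Matrix B B ℂ))) = ptraceB T * X := by
  ext a a'
  simp only [ptraceB, Matrix.of_apply, Matrix.mul_apply, Matrix.kroneckerMap_apply]
  rw [Finset.sum_comm]
  simp only [Fintype.sum_prod_type, Matrix.one_apply, mul_ite, mul_one, mul_zero,
    Finset.sum_ite_eq', Finset.mem_univ, if_true]
  simp only [Finset.sum_mul, Finset.sum_ite_eq, Finset.mem_univ, if_true]

lemma ptraceB_kron_mul (T : Matrix (A × B) (A × B) ℂ) (X : Matrix A A ℂ) :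
    ptraceB ((X ⊗ₖ (1 : Matrix B B ℂ)) * T) = X * ptraceB T := by
  ext a a'
  simp only [ptraceB, Matrix.of_apply, Matrix.mul_apply, Matrix.kroneckerMap_apply]
  rw [Finset.sum_comm]
  simp only [Fintype.sum_prod_type, Matrix.one_apply, ite_mul, one_mul, zero_mul, mul_ite,
    mul_one, mul_zero]
  simp only [Finset.mul_sum, Finset.sum_ite_eq, Finset.sum_ite_eq', Finset.mem_univ, if_true]

lemma trace_ptraceB (T : Matrix (A × B) (A × B) ℂ) :
    (ptraceB T).trace = T.trace := by
  simp only [Matrix.trace, ptraceB, Matrix.diag_apply, Matrix.of_apply]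
  rw [← Finset.sum_product']
  rfl

lemma kron_conjTranspose (X : Matrix A A ℂ) :
    (X ⊗ₖ (1 : Matrix B B ℂ))ᴴ = Xᴴ ⊗ₖ (1 : Matrix B B ℂ) := by
  ext p q
  cases p with | mk a b => cases q with | mk a' b' =>
  simp only [Matrix.conjTranspose_apply, Matrix.kroneckerMap_apply, Matrix.one_apply,
    star_mul']
  by_cases h : b' = b
  · subst h; simp
  · rw [if_neg h, if_neg (fun hh => h hh.symm)]
    simp


lemma block_contraction_iff_left {C : Matrix n n ℂ} :
    (Matrix.fromBlocks 1 C Cᴴ 1).PosSemidef ↔ (1 - Cᴴ * C).PosSemidef := by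
  haveI : Invertible (1 : Matrix n n ℂ) := invertibleOne
  have := Matrix.PosDef.fromBlocks₁₁ (A := (1 : Matrix n n ℂ)) C 1 Matrix.PosDef.one
  simpa using this

lemma block_contraction_iff_right {C : Matrix n n ℂ} :
    (Matrix.fromBlocks 1 C Cᴴ 1).PosSemidef ↔ (1 - C * Cᴴ).PosSemidef := by
  haveI : Invertible (1 : Matrix n n ℂ) := invertibleOne
  have := Matrix.PosDef.fromBlocks₂₂ (D := (1 : Matrix n n ℂ)) 1 C Matrix.PosDef.one
  simpa using this

lemma posSemidef_fromBlocks_diag {X : Matrix n n ℂ} {Y : Matrix m m ℂ}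
    (hX : X.PosSemidef) (hY : Y.PosSemidef) : (Matrix.fromBlocks X 0 0 Y).PosSemidef := by
  have h : Matrix.fromBlocks X 0 0 Y
      = Matrix.fromBlocks (matSqrt X) 0 0 (matSqrt Y) *
        (Matrix.fromBlocks (matSqrt X) 0 0 (matSqrt Y))ᴴ := by
    rw [Matrix.fromBlocks_conjTranspose, Matrix.fromBlocks_multiply]
    simp only [Matrix.conjTranspose_zero, Matrix.mul_zero, Matrix.zero_mul, add_zero, zero_add,
      matSqrt_herm hX, matSqrt_herm hY, matSqrt_mul_self hX, matSqrt_mul_self hY]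
  rw [h]
  exact Matrix.posSemidef_self_mul_conjTranspose _

lemma sum_fromBlocks {ι : Type*} (s : Finset ι) (f : ι → Matrix n n ℂ) (g : ι → Matrix n m ℂ)
    (h : ι → Matrix m n ℂ) (k : ι → Matrix m m ℂ) :
    ∑ i ∈ s, Matrix.fromBlocks (f i) (g i) (h i) (k i)
      = Matrix.fromBlocks (∑ i ∈ s, f i) (∑ i ∈ s, g i) (∑ i ∈ s, h i) (∑ i ∈ s, k i) := by
  ext p q
  cases p <;> cases q <;> simp [Matrix.sum_apply]

lemma abs_trace_conjTranspose_mul_le (P Q : Matrix n m ℂ) :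
    ‖(Pᴴ * Q).trace‖ ≤ Real.sqrt ((Pᴴ * P).trace.re) * Real.sqrt ((Qᴴ * Q).trace.re) := by
  classical
  set x : EuclideanSpace ℂ (m × n) := WithLp.toLp 2 (fun p : m × n => P p.2 p.1) with hx
  set y : EuclideanSpace ℂ (m × n) := WithLp.toLp 2 (fun p : m × n => Q p.2 p.1) with hy
  have htr : ∀ (P' Q' : Matrix n m ℂ), (P'ᴴ * Q').trace
      = ∑ p : m × n, (starRingEnd ℂ) (P' p.2 p.1) * Q' p.2 p.1 := by
    intro P' Q'
    rw [Matrix.trace, Fintype.sum_prod_type]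
    simp [Matrix.mul_apply, Matrix.conjTranspose_apply]
  have hinner : (Pᴴ * Q).trace = inner (𝕜 := ℂ) x y := by
    rw [htr, PiLp.inner_apply]
    simp only [RCLike.inner_apply']
    rfl
  have hsq : ∀ (z : ℂ), (starRingEnd ℂ) z * z = ((‖z‖ ^ 2 : ℝ) : ℂ) := by
    intro z
    rw [← Complex.normSq_eq_conj_mul_self]
    norm_cast
    rw [← Complex.sq_norm]
  have hnx : Real.sqrt ((Pᴴ * P).trace.re) = ‖x‖ := by
    rw [EuclideanSpace.norm_eq]
    congr 1
    rw [htr, Complex.re_sum]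
    apply Finset.sum_congr rfl
    intro p _
    rw [hsq, Complex.ofReal_re]
  have hny : Real.sqrt ((Qᴴ * Q).trace.re) = ‖y‖ := by
    rw [EuclideanSpace.norm_eq]
    congr 1
    rw [htr, Complex.re_sum]
    apply Finset.sum_congr rfl
    intro p _
    rw [hsq, Complex.ofReal_re]
  rw [hinner, hnx, hny]
  exact norm_inner_le_norm (𝕜 := ℂ) x y

lemma conj_contraction_trace_le {X : Matrix n n ℂ} (hX : (1 - Xᴴ * X).PosSemidef)
    (G : Matrix n m ℂ) : ((X * G)ᴴ * (X * G)).trace.re ≤ (Gᴴ * G).trace.re := by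
  have h := re_trace_nonneg (hX.conjTranspose_mul_mul_same G)
  have he : Gᴴ * (1 - Xᴴ * X) * G = Gᴴ * G - (X * G)ᴴ * (X * G) := by
    rw [Matrix.mul_sub, Matrix.mul_one, Matrix.sub_mul, Matrix.conjTranspose_mul]
    simp only [Matrix.mul_assoc]
  rw [he, Matrix.trace_sub, Complex.sub_re] at h
  linarith

lemma contraction_mul {X Y : Matrix n n ℂ} (hX : (1 - Xᴴ * X).PosSemidef)
    (hY : (1 - Yᴴ * Y).PosSemidef) : (1 - (X * Y)ᴴ * (X * Y)).PosSemidef := by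
  have he : 1 - (X * Y)ᴴ * (X * Y) = (1 - Yᴴ * Y) + Yᴴ * (1 - Xᴴ * X) * Y := by
    rw [Matrix.conjTranspose_mul, Matrix.mul_sub, Matrix.mul_one, Matrix.sub_mul]
    simp only [Matrix.mul_assoc]
    abel
  rw [he]
  exact hY.add (hX.conjTranspose_mul_mul_same Y)


lemma re_trace_mul_le {K N : Matrix n n ℂ} (hK : (1 - Kᴴ * K).PosSemidef) :
    (K * N).trace.re ≤ (matSqrt (Nᴴ * N)).trace.re := by
  obtain ⟨V, hV, hVN, hNV⟩ := exists_polar N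
  have hNNpsd : (Nᴴ * N).PosSemidef := Matrix.posSemidef_conjTranspose_mul_self N
  have hJpsd : (matSqrt (Nᴴ * N)).PosSemidef := matSqrt_posSemidef hNNpsd
  set J := matSqrt (Nᴴ * N) with hJ
  set G := matSqrt J with hG
  have hGpsd : G.PosSemidef := matSqrt_posSemidef hJpsd
  have hGG : G * G = J := matSqrt_mul_self hJpsd
  have hGH : Gᴴ = G := matSqrt_herm hJpsd
  have h1 : (K * N).trace = (Gᴴ * ((K * V) * G)).trace := by
    rw [hGH, ← hNV, ← hGG]
    rw [show K * (V * (G * G)) = (K * V * G) * G by simp only [Matrix.mul_assoc]]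
    rw [Matrix.trace_mul_comm]
  have h2 : (K * N).trace.re ≤ ‖(Gᴴ * ((K * V) * G)).trace‖ := by
    rw [h1]
    exact Complex.re_le_norm _
  have h3 := abs_trace_conjTranspose_mul_le G ((K * V) * G)
  have h4 : (Gᴴ * G).trace.re = J.trace.re := by rw [hGH, hGG]
  have h5 : (((K * V) * G)ᴴ * ((K * V) * G)).trace.re ≤ (Gᴴ * G).trace.re :=
    conj_contraction_trace_le (contraction_mul hK hV) G
  have hJnn : 0 ≤ J.trace.re := re_trace_nonneg hJpsd
  calc (K * N).trace.re ≤ ‖(Gᴴ * ((K * V) * G)).trace‖ := h2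
    _ ≤ Real.sqrt ((Gᴴ * G).trace.re) * Real.sqrt ((((K * V) * G)ᴴ * ((K * V) * G)).trace.re) := h3
    _ ≤ Real.sqrt (J.trace.re) * Real.sqrt (J.trace.re) := by
        apply mul_le_mul
        · rw [h4]
        · apply Real.sqrt_le_sqrt; rw [← h4]; exact h5
        · exact Real.sqrt_nonneg _
        · exact Real.sqrt_nonneg _
    _ = J.trace.re := Real.mul_self_sqrt hJnn

lemma ptraceB_zero : ptraceB (0 : Matrix (A × B) (A × B) ℂ) = 0 := by
  ext a a'
  simp [ptraceB]

end FidAux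

open FidAux Matrix Complex in
/-- **Monotonicity of the one-point fidelity correlator under partial trace**:
enlarging the region cannot increase the local fidelity correlator. -/
theorem one_point_fidelity_monotone_under_partial_trace
    {A B : Type*} [Fintype A] [DecidableEq A] [Fintype B] [DecidableEq B]
    (ρ : Matrix (A × B) (A × B) ℂ) (hρ : ρ.PosSemidef) (hρtr : ρ.trace = 1)
    (O : Matrix A A ℂ) :
    fidelity ρ ((O ⊗ₖ (1 : Matrix B B ℂ)) * ρ * (O ⊗ₖ (1 : Matrix B B ℂ))ᴴ) ≤
      fidelity (ptraceB ρ) (O * ptraceB ρ * Oᴴ) := by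
  classical
  set S := matSqrt ρ with hSdef
  have hSpsd : S.PosSemidef := matSqrt_posSemidef hρ
  have hSS : S * S = ρ := matSqrt_mul_self hρ
  have hSH : Sᴴ = S := matSqrt_herm hρ
  set M : Matrix (A × B) (A × B) ℂ := O ⊗ₖ (1 : Matrix B B ℂ) with hMdef
  have hMH : Mᴴ = Oᴴ ⊗ₖ (1 : Matrix B B ℂ) := kron_conjTranspose O
  set Y : Matrix (A × B) (A × B) ℂ := S * Mᴴ * S with hYdef
  have hYY : Yᴴ * Y = S * (M * ρ * Mᴴ) * S := by
    rw [hYdef]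
    rw [Matrix.conjTranspose_mul, Matrix.conjTranspose_mul, hSH,
      Matrix.conjTranspose_conjTranspose, ← hSS]
    simp only [Matrix.mul_assoc]
  -- left side
  have hLHS : fidelity ρ (M * ρ * Mᴴ) = (matSqrt (Yᴴ * Y)).trace.re := by
    rw [fidelity, hYY, ← hSdef]
  obtain ⟨W, hW, hWY, hYW⟩ := exists_polar Y
  -- the contraction C and the operator T
  set C : Matrix (A × B) (A × B) ℂ := Wᴴ with hCdef
  have hCC : (1 - C * Cᴴ).PosSemidef := by
    rw [hCdef, Matrix.conjTranspose_conjTranspose]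
    exact hW
  have hCblock : (Matrix.fromBlocks 1 C Cᴴ 1).PosSemidef :=
    block_contraction_iff_right.mpr hCC
  set T : Matrix (A × B) (A × B) ℂ := S * C * S with hTdef
  have hTH : Tᴴ = S * Cᴴ * S := by
    rw [hTdef, Matrix.conjTranspose_mul, Matrix.conjTranspose_mul, hSH]
    simp only [Matrix.mul_assoc]
  -- trace identity : tr(Wᴴ Y) = tr (T * Mᴴ)
  have htr1 : (Wᴴ * Y).trace = (T * Mᴴ).trace := by
    rw [hYdef, hTdef, hCdef]
    rw [show Wᴴ * (S * Mᴴ * S) = (Wᴴ * S * Mᴴ) * S by simp only [Matrix.mul_assoc]]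
    rw [Matrix.trace_mul_comm]
    simp only [Matrix.mul_assoc]
  -- partial trace data
  have hρA : (ptraceB ρ).PosSemidef := ptraceB_posSemidef hρ
  set R := matSqrt (ptraceB ρ) with hRdef
  have hRpsd : R.PosSemidef := matSqrt_posSemidef hρA
  have hRR : R * R = ptraceB ρ := matSqrt_mul_self hρA
  have hRH : Rᴴ = R := matSqrt_herm hρA
  obtain ⟨Rp, P, hRpH, hPH, h1P, hRRp, hRpR, hPR, hRP, hRpMRp⟩ := exists_pinv hρA
  rw [← hRdef] at hRRp hRpR hPR hRP
  set TA := ptraceB T with hTAdef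
  -- the kernel projection kills S
  have hPP : P * P = P := by
    calc P * P = P * (R * Rp) := by rw [hRRp]
    _ = (P * R) * Rp := by rw [Matrix.mul_assoc]
    _ = R * Rp := by rw [hPR]
    _ = P := hRRp
  set Q : Matrix A A ℂ := 1 - P with hQdef
  have hQH : Qᴴ = Q := by
    rw [hQdef, Matrix.conjTranspose_sub, Matrix.conjTranspose_one, hPH]
  have hQQ : Q * Q = Q := by
    rw [hQdef, Matrix.mul_sub, Matrix.mul_one, Matrix.sub_mul, Matrix.one_mul, hPP]
    abel
  have hQS : (Q ⊗ₖ (1 : Matrix B B ℂ)) * S = 0 := by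
    apply eq_zero_of_trace_mul_conjTranspose
    have hconj : ((Q ⊗ₖ (1 : Matrix B B ℂ)) * S)ᴴ = S * (Q ⊗ₖ (1 : Matrix B B ℂ)) := by
      rw [Matrix.conjTranspose_mul, hSH, kron_conjTranspose, hQH]
    rw [hconj]
    rw [show (Q ⊗ₖ (1 : Matrix B B ℂ)) * S * (S * (Q ⊗ₖ (1 : Matrix B B ℂ)))
        = (Q ⊗ₖ (1 : Matrix B B ℂ)) * ρ * (Q ⊗ₖ (1 : Matrix B B ℂ)) by
      rw [← hSS]; simp only [Matrix.mul_assoc]]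
    rw [Matrix.trace_mul_cycle]
    rw [← Matrix.mul_kronecker_mul, hQQ, Matrix.one_mul]
    rw [← trace_ptraceB, ptraceB_kron_mul]
    rw [hQdef, Matrix.sub_mul, Matrix.one_mul]
    have hPρA : P * ptraceB ρ = ptraceB ρ := by
      rw [← hRR, ← Matrix.mul_assoc, hPR]
    rw [hPρA]
    simp
  have hSQ : S * (Q ⊗ₖ (1 : Matrix B B ℂ)) = 0 := by
    have := congrArg Matrix.conjTranspose hQS
    rw [Matrix.conjTranspose_mul, hSH, kron_conjTranspose, hQH, Matrix.conjTranspose_zero] at this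
    exact this
  -- support facts for TA
  have hQTA : Q * TA = 0 := by
    rw [hTAdef, ← ptraceB_kron_mul]
    rw [show (Q ⊗ₖ (1 : Matrix B B ℂ)) * (S * C * S)
        = ((Q ⊗ₖ (1 : Matrix B B ℂ)) * S) * C * S by simp only [Matrix.mul_assoc]]
    rw [hQS, Matrix.zero_mul, Matrix.zero_mul, ptraceB_zero]
  have hTAQ : TA * Q = 0 := by
    rw [hTAdef, ← ptraceB_mul_kron]
    rw [show S * C * S * (Q ⊗ₖ (1 : Matrix B B ℂ))
        = S * C * (S * (Q ⊗ₖ (1 : Matrix B B ℂ))) by simp only [Matrix.mul_assoc]]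
    rw [hSQ, Matrix.mul_zero, ptraceB_zero]
  have hPTA : P * TA = TA := by
    have : (1 - Q) * TA = TA - Q * TA := by
      rw [Matrix.sub_mul, Matrix.one_mul]
    rw [hQdef] at this
    simp only [sub_sub_cancel] at this
    rw [this, hQTA, sub_zero]
  have hTAP : TA * P = TA := by
    have : TA * (1 - Q) = TA - TA * Q := by
      rw [Matrix.mul_sub, Matrix.mul_one]
    rw [hQdef] at this
    simp only [sub_sub_cancel] at this
    rw [this, hTAQ, sub_zero]
  -- K and its contraction property
  set K : Matrix A A ℂ := Rp * TA * Rp with hKdef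
  have hKH : Kᴴ = Rp * TAᴴ * Rp := by
    rw [hKdef, Matrix.conjTranspose_mul, Matrix.conjTranspose_mul, hRpH]
    simp only [Matrix.mul_assoc]
  have hRKR : R * K * R = TA := by
    rw [hKdef]
    rw [show R * (Rp * TA * Rp) * R = (R * Rp) * TA * (Rp * R) by simp only [Matrix.mul_assoc]]
    rw [hRRp, hRpR, hPTA, hTAP]
  -- block positivity chain
  have hbig1 : (Matrix.fromBlocks ρ T Tᴴ ρ).PosSemidef := by
    have hD : (Matrix.fromBlocks S 0 0 S : Matrix ((A × B) ⊕ (A × B)) ((A × B) ⊕ (A × B)) ℂ)ᴴ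
        = Matrix.fromBlocks S 0 0 S := by
      rw [Matrix.fromBlocks_conjTranspose, hSH, Matrix.conjTranspose_zero]
    have h := hCblock.conjTranspose_mul_mul_same (Matrix.fromBlocks S 0 0 S)
    rw [hD] at h
    rw [Matrix.fromBlocks_multiply, Matrix.fromBlocks_multiply] at h
    simpa only [Matrix.mul_zero, Matrix.zero_mul, Matrix.mul_one, Matrix.one_mul, add_zero,
      zero_add, hSS, ← hTdef, ← hTH, Matrix.mul_assoc] using h
  have hbig2 : (Matrix.fromBlocks (ptraceB ρ) TA TAᴴ (ptraceB ρ)).PosSemidef := by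
    have heq : Matrix.fromBlocks (ptraceB ρ) TA TAᴴ (ptraceB ρ)
        = ∑ b : B, (Matrix.fromBlocks (embE b) 0 0 (embE b) : Matrix ((A × B) ⊕ (A × B)) (A ⊕ A) ℂ)ᴴ *
            Matrix.fromBlocks ρ T Tᴴ ρ * (Matrix.fromBlocks (embE b) 0 0 (embE b) : Matrix ((A × B) ⊕ (A × B)) (A ⊕ A) ℂ) := by
      have hterm : ∀ b : B, (Matrix.fromBlocks (embE b) 0 0 (embE b) : Matrix ((A × B) ⊕ (A × B)) (A ⊕ A) ℂ)ᴴ *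
            Matrix.fromBlocks ρ T Tᴴ ρ * (Matrix.fromBlocks (embE b) 0 0 (embE b) : Matrix ((A × B) ⊕ (A × B)) (A ⊕ A) ℂ)
          = Matrix.fromBlocks ((embE b : Matrix (A × B) A ℂ)ᴴ * ρ * (embE b : Matrix (A × B) A ℂ)) ((embE b : Matrix (A × B) A ℂ)ᴴ * T * (embE b : Matrix (A × B) A ℂ))
              ((embE b : Matrix (A × B) A ℂ)ᴴ * Tᴴ * (embE b : Matrix (A × B) A ℂ)) ((embE b : Matrix (A × B) A ℂ)ᴴ * ρ * (embE b : Matrix (A × B) A ℂ)) := by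
        intro b
        rw [Matrix.fromBlocks_conjTranspose, Matrix.conjTranspose_zero,
          Matrix.fromBlocks_multiply, Matrix.fromBlocks_multiply]
        simp only [Matrix.mul_zero, Matrix.zero_mul, add_zero, zero_add]
      rw [Finset.sum_congr rfl fun b _ => hterm b, sum_fromBlocks]
      rw [← ptraceB_eq_sum_conj, ← ptraceB_eq_sum_conj, ← ptraceB_eq_sum_conj,
        ptraceB_conjTranspose, ← hTAdef]
    rw [heq]
    exact posSemidef_sum _ _ fun b _ =>
      hbig1.conjTranspose_mul_mul_same (Matrix.fromBlocks (embE b) 0 0 (embE b))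
  have hbig3 : (Matrix.fromBlocks P K Kᴴ P).PosSemidef := by
    have hD : (Matrix.fromBlocks Rp 0 0 Rp : Matrix (A ⊕ A) (A ⊕ A) ℂ)ᴴ
        = Matrix.fromBlocks Rp 0 0 Rp := by
      rw [Matrix.fromBlocks_conjTranspose, hRpH, Matrix.conjTranspose_zero]
    have h := hbig2.conjTranspose_mul_mul_same (Matrix.fromBlocks Rp 0 0 Rp)
    rw [hD, Matrix.fromBlocks_multiply, Matrix.fromBlocks_multiply] at h
    simpa only [Matrix.mul_zero, Matrix.zero_mul, add_zero, zero_add, hRpMRp,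
      ← hKdef, ← hKH, Matrix.mul_assoc] using h
  have hbig4 : (Matrix.fromBlocks 1 K Kᴴ 1).PosSemidef := by
    have heq : (Matrix.fromBlocks 1 K Kᴴ 1 : Matrix (A ⊕ A) (A ⊕ A) ℂ)
        = Matrix.fromBlocks P K Kᴴ P + Matrix.fromBlocks (1 - P) 0 0 (1 - P) := by
      rw [Matrix.fromBlocks_add, add_zero, add_zero,
        show P + (1 - P) = (1 : Matrix A A ℂ) from by abel]
    rw [heq]
    exact hbig3.add (posSemidef_fromBlocks_diag h1P h1P)
  have hKcon : (1 - Kᴴ * K).PosSemidef := block_contraction_iff_left.mp hbig4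
  -- final trace computations
  set N : Matrix A A ℂ := R * Oᴴ * R with hNdef
  have htr2 : (T * Mᴴ).trace = (K * N).trace := by
    rw [hMH, ← trace_ptraceB, ptraceB_mul_kron, ← hTAdef, ← hRKR, hNdef]
    rw [show R * K * R * Oᴴ = R * (K * (R * Oᴴ)) by simp only [Matrix.mul_assoc]]
    rw [Matrix.trace_mul_comm]
    simp only [Matrix.mul_assoc]
  have hNN : Nᴴ * N = R * (O * ptraceB ρ * Oᴴ) * R := by
    rw [hNdef, Matrix.conjTranspose_mul, Matrix.conjTranspose_mul, hRH,
      Matrix.conjTranspose_conjTranspose, ← hRR]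
    simp only [Matrix.mul_assoc]
  have hRHS : fidelity (ptraceB ρ) (O * ptraceB ρ * Oᴴ) = (matSqrt (Nᴴ * N)).trace.re := by
    rw [fidelity, hNN, ← hRdef]
  rw [hLHS, hRHS, ← hWY, htr1, htr2]
  exact re_trace_mul_le hKcon
end
end

section
/- Let ρ be a nonzero positive semidefinite complex matrix, let α > 0, and write S := ρ^{α/2} for the positive semidefinite real power of ρ (so tr(S²) = tr(ρ^α) > 0). Let Ω be a finite index set and (O_x)_{x ∈ Ω} matrices of the same size as ρ. Then the connected Rényi-α matrix R_c, defined by [R_c]_{x,y} := tr(S O_x O_y† S O_y O_x†)/tr(S²) − ( tr(S O_x S O_x†)/tr(S²) ) · ( tr(S O_y† S O_y)/tr(S²) ), is a positive semidefinite |Ω| × |Ω| matrix. -/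
noncomputable section

open scoped Matrix Kronecker ComplexOrder

/-- Real power of a matrix via the spectral decomposition (defaults to `0` if not Hermitian). -/
noncomputable def matRpow {n : Type*} [Fintype n] [DecidableEq n]
    (M : Matrix n n ℂ) (β : ℝ) : Matrix n n ℂ :=
  open scoped Classical in
  if h : M.IsHermitian then
    (h.eigenvectorUnitary : Matrix n n ℂ) *
      Matrix.diagonal (fun i => (((h.eigenvalues i) ^ β : ℝ) : ℂ)) *
      (star h.eigenvectorUnitary : Matrix n n ℂ)
  else 0

set_option linter.unusedVariables false in
/-- trace of `Aᴴ * B` as a sum over entries. -/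
private lemma trace_conjTranspose_mul' {n : Type*} [Fintype n] (A B : Matrix n n ℂ) :
    (Aᴴ * B).trace = ∑ p : n × n, star (A p.1 p.2) * B p.1 p.2 := by
  simp only [Matrix.trace, Matrix.diag, Matrix.mul_apply, Matrix.conjTranspose_apply,
    Fintype.sum_prod_type]
  rw [Finset.sum_comm]


/-- **Lemma (connected Rényi-α matrix is positive semidefinite)**. -/
theorem connected_renyi_matrix_posSemidef
    {n : Type*} [Fintype n] [DecidableEq n]
    (ρ : Matrix n n ℂ) (hρ : ρ.PosSemidef) (hρ0 : ρ ≠ 0)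
    (α : ℝ) (hα : 0 < α)
    (S : Matrix n n ℂ) (hS : S = matRpow ρ (α / 2))
    {Ω : Type*} [Fintype Ω] [DecidableEq Ω] (O : Ω → Matrix n n ℂ) :
    (Matrix.of fun x y : Ω =>
        (S * O x * (O y)ᴴ * S * O y * (O x)ᴴ).trace / (S * S).trace -
          ((S * O x * S * (O x)ᴴ).trace / (S * S).trace) *
            ((S * (O y)ᴴ * S * O y).trace / (S * S).trace)).PosSemidef := by
  classical
  have hH : ρ.IsHermitian := hρ.1
  set U : Matrix n n ℂ := (hH.eigenvectorUnitary : Matrix n n ℂ) with hU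
  set lam := hH.eigenvalues with hlamdef
  set D := Matrix.diagonal (fun i => ((lam i ^ (α/2) : ℝ) : ℂ)) with hD
  have hSdef : S = U * D * Uᴴ := by
    rw [hS, matRpow, dif_pos hH, ← Matrix.star_eq_conjTranspose]
  have hUU : Uᴴ * U = 1 := by
    rw [← Matrix.star_eq_conjTranspose]
    exact Matrix.UnitaryGroup.star_mul_self _
  have hlam : ∀ i, 0 ≤ lam i := hρ.eigenvalues_nonneg
  have hSpsd : S.PosSemidef := by
    rw [hSdef]
    exact (Matrix.posSemidef_diagonal_iff.mpr fun i =>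
      Complex.zero_le_real.mpr (Real.rpow_nonneg (hlam i) _)).mul_mul_conjTranspose_same U
  have hSH : S.IsHermitian := hSpsd.1
  set t : ℝ := ∑ i, (lam i ^ (α/2))^2 with ht
  have hT : (S * S).trace = (t : ℂ) := by
    have hSS : (U * D * Uᴴ) * (U * D * Uᴴ) = U * (D * D) * Uᴴ := by
      calc (U * D * Uᴴ) * (U * D * Uᴴ) = U * D * (Uᴴ * U) * D * Uᴴ := by
            simp only [Matrix.mul_assoc]
        _ = U * (D * D) * Uᴴ := by rw [hUU]; simp only [Matrix.mul_one, Matrix.mul_assoc]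
    rw [hSdef, hSS, Matrix.trace_mul_cycle, ← Matrix.mul_assoc, hUU, Matrix.one_mul]
    simp only [hD, Matrix.diagonal_mul_diagonal, Matrix.trace_diagonal]
    rw [ht]
    push_cast
    simp [sq]
  have htpos : 0 < t := by
    obtain ⟨i, hi⟩ : ∃ i, lam i ≠ 0 := by
      by_contra h
      push_neg at h
      apply hρ0
      have hDz : Matrix.diagonal (RCLike.ofReal ∘ lam : n → ℂ) = 0 := by
        ext j k
        by_cases hjk : j = k <;>
          simp [Matrix.diagonal, hjk, h]
      rw [hH.spectral_theorem]
      rw [← hlamdef, hDz]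
      simp
    refine Finset.sum_pos' (fun j _ => sq_nonneg _) ⟨i, Finset.mem_univ i, ?_⟩
    have h1 : 0 < lam i := lt_of_le_of_ne (hlam i) (Ne.symm hi)
    have h2 : 0 < lam i ^ (α/2) := Real.rpow_pos_of_pos h1 _
    positivity
  have htC : (t : ℂ) ≠ 0 := by
    simp [Complex.ofReal_ne_zero, ne_of_gt htpos]
  -- the vectors
  set P : Ω → Matrix n n ℂ := fun x => (O x)ᴴ * S * O x with hP
  set c : Ω → ℂ := fun x => (P x * S).trace with hc
  have hPH : ∀ x, (P x)ᴴ = P x := by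
    intro x
    simp [hP, Matrix.conjTranspose_mul, hSH.eq, Matrix.mul_assoc]
  have hcstar : ∀ x, star (c x) = c x := by
    intro x
    rw [hc]
    calc star ((P x * S).trace) = ((P x * S)ᴴ).trace := (Matrix.trace_conjTranspose _).symm
      _ = (Sᴴ * (P x)ᴴ).trace := by rw [Matrix.conjTranspose_mul]
      _ = (S * P x).trace := by rw [hSH.eq, hPH]
      _ = (P x * S).trace := Matrix.trace_mul_comm _ _
  -- trace identities for the entries
  have h1 : ∀ x y, (S * O x * (O y)ᴴ * S * O y * (O x)ᴴ).trace = (P x * P y).trace := by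
    intro x y
    rw [Matrix.trace_mul_comm]
    congr 1
    simp only [hP, Matrix.mul_assoc]
  have h2 : ∀ x, (S * O x * S * (O x)ᴴ).trace = c x := by
    intro x
    rw [Matrix.trace_mul_comm]
    congr 1
    simp only [hP, Matrix.mul_assoc]
  have h3 : ∀ y, (S * (O y)ᴴ * S * O y).trace = c y := by
    intro y
    rw [show S * (O y)ᴴ * S * O y = S * ((O y)ᴴ * S * O y) by
      simp only [Matrix.mul_assoc], Matrix.trace_mul_comm]
  set s : ℝ := Real.sqrt t with hsdef
  have hs2 : (s : ℂ) * (s : ℂ) = (t : ℂ) := by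
    rw [← Complex.ofReal_mul, Real.mul_self_sqrt htpos.le]
  have hsne : (s : ℂ) ≠ 0 := by
    have : s ≠ 0 := ne_of_gt (Real.sqrt_pos.mpr htpos)
    simpa using this
  set G : Ω → Matrix n n ℂ := fun x => P x - (c x / (t : ℂ)) • S with hG
  set V : Matrix (n × n) Ω ℂ := Matrix.of fun p x => ((s⁻¹ : ℝ) : ℂ) * G x p.1 p.2 with hV
  have key : (Matrix.of fun x y : Ω =>
        (S * O x * (O y)ᴴ * S * O y * (O x)ᴴ).trace / (S * S).trace -
          ((S * O x * S * (O x)ᴴ).trace / (S * S).trace) *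
            ((S * (O y)ᴴ * S * O y).trace / (S * S).trace)) = Vᴴ * V := by
    ext x y
    have hGH : (G x)ᴴ = G x := by
      rw [hG]
      simp only [Matrix.conjTranspose_sub, Matrix.conjTranspose_smul, hPH, hSH.eq]
      rw [star_div₀, hcstar]
      congr 2
      simp [Complex.star_def, Complex.conj_ofReal]
    have hRHS : (Vᴴ * V) x y = ((s⁻¹ : ℝ) : ℂ) * ((s⁻¹ : ℝ) : ℂ) * ((G x)ᴴ * G y).trace := by
      rw [trace_conjTranspose_mul']
      simp only [hV, Matrix.mul_apply, Matrix.conjTranspose_apply, Matrix.of_apply,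
        Fintype.sum_prod_type]
      simp only [star_mul', Complex.star_def, Complex.conj_ofReal, Finset.mul_sum]
      congr 1; ext i; congr 1; ext j
      ring
    have hGtr : ((G x)ᴴ * G y).trace = (P x * P y).trace - c x * c y / (t : ℂ) := by
      rw [hGH, hG]
      simp only [Matrix.sub_mul, Matrix.mul_sub, Matrix.smul_mul, Matrix.mul_smul,
        Matrix.trace_sub, Matrix.trace_smul, smul_smul, smul_eq_mul]
      rw [show (S * P y).trace = c y from by rw [Matrix.trace_mul_comm],
        show (P x * S).trace = c x from rfl, hT]
      field_simp
      ring
    rw [Matrix.of_apply, h1, h2, h3, hT, hRHS, hGtr]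
    have hsinv : ((s⁻¹ : ℝ) : ℂ) * ((s⁻¹ : ℝ) : ℂ) = ((t : ℂ))⁻¹ := by
      push_cast
      rw [← mul_inv, hs2]
    rw [hsinv]
    field_simp
  rw [key]
  exact Matrix.posSemidef_conjTranspose_mul_self V
end
end

section
/- Let ρ be a nonzero positive semidefinite complex matrix, let α > 0, write S := ρ^{α/2} (so tr(S²) = tr(ρ^α) > 0), let Ω be a nonempty finite index set and (O_x)_{x ∈ Ω} matrices of the same size as ρ. Define the Rényi-α correlators R(O) := tr(S O S O†)/tr(S²). Then (1/|Ω|²) Σ_{x,y ∈ Ω} R(O_x O_y†) ≥ ( (1/|Ω|) Σ_{x ∈ Ω} R(O_x) )², where both sides are real numbers. -/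
noncomputable section

open scoped Matrix Kronecker ComplexOrder

lemma trace_re_eq' {n : Type*} [Fintype n] [DecidableEq n]
    (A B : Matrix n n ℂ) (hB : B.IsHermitian) :
    (A * B).trace.re = ∑ i, ∑ j,
      ((A i j).re * (B i j).re + (A i j).im * (B i j).im) := by
  have hBij : ∀ i j, B j i = starRingEnd ℂ (B i j) := by
    intro i j
    conv_lhs => rw [← hB.eq]
    simp [Matrix.conjTranspose_apply]
  have : (A * B).trace = ∑ i, ∑ j, A i j * B j i := by
    simp [Matrix.trace, Matrix.diag, Matrix.mul_apply]
  rw [this]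
  rw [Complex.re_sum]
  refine Finset.sum_congr rfl fun i _ => ?_
  rw [Complex.re_sum]
  refine Finset.sum_congr rfl fun j _ => ?_
  rw [hBij i j]
  simp [Complex.mul_re]

lemma trace_cs {n : Type*} [Fintype n] [DecidableEq n]
    (Q S : Matrix n n ℂ) (hQ : Q.IsHermitian) (hS : S.IsHermitian) :
    ((Q * S).trace.re) ^ 2 ≤ (Q * Q).trace.re * (S * S).trace.re := by
  classical
  set f : (n × n) × Bool → ℝ := fun p => if p.2 then (Q p.1.1 p.1.2).re else (Q p.1.1 p.1.2).im
  set g : (n × n) × Bool → ℝ := fun p => if p.2 then (S p.1.1 p.1.2).re else (S p.1.1 p.1.2).im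
  have key : ∀ (A B : Matrix n n ℂ), B.IsHermitian →
      ∀ (u v : (n × n) × Bool → ℝ),
      (u = fun p => if p.2 then (A p.1.1 p.1.2).re else (A p.1.1 p.1.2).im) →
      (v = fun p => if p.2 then (B p.1.1 p.1.2).re else (B p.1.1 p.1.2).im) →
      (A * B).trace.re = ∑ p : (n × n) × Bool, u p * v p := by
    intro A B hB u v hu hv
    rw [trace_re_eq' A B hB, hu, hv]
    rw [Fintype.sum_prod_type]
    rw [Fintype.sum_prod_type]
    refine Finset.sum_congr rfl fun i _ => Finset.sum_congr rfl fun j _ => ?_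
    simp [Fintype.sum_bool, add_comm]
  rw [key Q S hS f g rfl rfl, key Q Q hQ f f rfl rfl, key S S hS g g rfl rfl]
  have := Finset.sum_mul_sq_le_sq_mul_sq Finset.univ f g
  simpa [pow_two] using this

/-- **Corollary (averaged two-point Rényi-α correlator dominates the square of the averaged
one-point Rényi-α correlator)**. -/
theorem avg_two_point_renyi_ge_sq_avg_one_point_renyi
    {n : Type*} [Fintype n] [DecidableEq n]
    (ρ : Matrix n n ℂ) (hρ : ρ.PosSemidef) (hρ0 : ρ ≠ 0)
    (α : ℝ) (hα : 0 < α)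
    (S : Matrix n n ℂ) (hS : S = matRpow ρ (α / 2))
    {Ω : Type*} [Fintype Ω] [Nonempty Ω] (O : Ω → Matrix n n ℂ) :
    ((1 : ℝ) / (Fintype.card Ω) ^ 2) *
        ∑ x : Ω, ∑ y : Ω,
          ((S * (O x * (O y)ᴴ) * S * (O x * (O y)ᴴ)ᴴ).trace.re / (S * S).trace.re) ≥
      (((1 : ℝ) / Fintype.card Ω) *
          ∑ x : Ω, ((S * O x * S * (O x)ᴴ).trace.re / (S * S).trace.re)) ^ 2 := by
  classical
  have hherm : ρ.IsHermitian := hρ.1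
  set d : n → ℂ := fun i => (((hherm.eigenvalues i) ^ (α/2) : ℝ) : ℂ) with hd
  set U : Matrix n n ℂ := (hherm.eigenvectorUnitary : Matrix n n ℂ) with hU
  have hSdef : S = U * Matrix.diagonal d * star U := by
    rw [hS, matRpow, dif_pos hherm]
  have hU1 : star U * U = 1 := by
    rw [hU]
    exact (Matrix.mem_unitaryGroup_iff').mp (hherm.eigenvectorUnitary).2
  have hstar : star d = d := by
    funext i
    simp [hd]
  have hdiagh : (Matrix.diagonal d).IsHermitian := by
    rw [Matrix.IsHermitian, Matrix.diagonal_conjTranspose, hstar]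
  have hSh : S.IsHermitian := by
    rw [hSdef, Matrix.star_eq_conjTranspose]
    exact Matrix.isHermitian_mul_mul_conjTranspose U hdiagh
  -- S ≠ 0
  have hDS : Matrix.diagonal d = star U * S * U := by
    rw [hSdef, ← Matrix.mul_assoc, ← Matrix.mul_assoc, hU1, Matrix.one_mul,
      Matrix.mul_assoc, hU1, Matrix.mul_one]
  have hS0 : S ≠ 0 := by
    intro h0
    apply hρ0
    have hDzero : Matrix.diagonal d = 0 := by rw [hDS, h0]; simp
    have hev : ∀ i, hherm.eigenvalues i = 0 := by
      intro i
      have h1 : d i = 0 := by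
        have := congrFun (congrFun hDzero i) i
        simpa [Matrix.diagonal_apply_eq] using this
      simp only [hd] at h1
      have h2 : ((hherm.eigenvalues i) ^ (α/2) : ℝ) = 0 := by
        exact_mod_cast h1
      exact (Real.rpow_eq_zero (hρ.eigenvalues_nonneg i) (by positivity)).mp h2
    rw [hherm.spectral_theorem]
    have : Matrix.diagonal ((RCLike.ofReal ∘ hherm.eigenvalues) : n → ℂ) = 0 := by
      ext i j
      rcases eq_or_ne i j with rfl | hij
      · simp [Matrix.diagonal_apply_eq, hev]
      · simp [Matrix.diagonal_apply_ne _ hij]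
    rw [this]
    simp
  -- T > 0
  have hTpos : 0 < (S * S).trace.re := by
    rw [trace_re_eq' S S hSh]
    obtain ⟨i, j, hij⟩ : ∃ i j, S i j ≠ 0 := by
      by_contra h
      push_neg at h
      exact hS0 (by ext i j; simp [h])
    simp_rw [← Complex.normSq_apply]
    refine Finset.sum_pos' (fun i _ => Finset.sum_nonneg fun j _ => Complex.normSq_nonneg _)
      ⟨i, Finset.mem_univ i, ?_⟩
    refine Finset.sum_pos' (fun j _ => Complex.normSq_nonneg _)
      ⟨j, Finset.mem_univ j, Complex.normSq_pos.mpr hij⟩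
  set Q : Matrix n n ℂ := ∑ x : Ω, (O x)ᴴ * S * O x with hQ
  have hQh : Q.IsHermitian := by
    rw [Matrix.IsHermitian, hQ, Matrix.conjTranspose_sum]
    refine Finset.sum_congr rfl fun x _ => ?_
    simp [Matrix.conjTranspose_mul, hSh.eq, Matrix.mul_assoc]
  have htr2 : ∑ x : Ω, ∑ y : Ω, (S * (O x * (O y)ᴴ) * S * (O x * (O y)ᴴ)ᴴ).trace
      = (Q * Q).trace := by
    rw [show Q * Q = ∑ x : Ω, ∑ y : Ω, ((O x)ᴴ * S * O x) * ((O y)ᴴ * S * O y) from by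
      rw [hQ, Finset.sum_mul_sum]]
    rw [Matrix.trace_sum]
    simp_rw [Matrix.trace_sum]
    refine Finset.sum_congr rfl fun x _ => Finset.sum_congr rfl fun y _ => ?_
    rw [Matrix.conjTranspose_mul, Matrix.conjTranspose_conjTranspose]
    rw [show S * (O x * (O y)ᴴ) * S * ((O y) * (O x)ᴴ)
        = (S * (O x * (O y)ᴴ) * S * O y) * (O x)ᴴ from by noncomm_ring]
    rw [Matrix.trace_mul_comm]
    congr 1
    noncomm_ring
  have htr1 : ∑ x : Ω, (S * O x * S * (O x)ᴴ).trace = (Q * S).trace := by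
    rw [show Q * S = ∑ x : Ω, ((O x)ᴴ * S * O x) * S from by rw [hQ, Finset.sum_mul]]
    rw [Matrix.trace_sum]
    refine Finset.sum_congr rfl fun x _ => ?_
    rw [Matrix.trace_mul_comm]
    congr 1
    noncomm_ring
  have hcs := trace_cs Q S hQh hSh
  set T : ℝ := (S * S).trace.re with hT
  set a : ℝ := (Q * Q).trace.re with ha
  set b : ℝ := (Q * S).trace.re with hb
  set N : ℝ := (Fintype.card Ω : ℝ) with hN
  have hNpos : 0 < N := by
    rw [hN]
    exact_mod_cast Fintype.card_pos
  have e2 : ∑ x : Ω, ∑ y : Ω,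
      ((S * (O x * (O y)ᴴ) * S * (O x * (O y)ᴴ)ᴴ).trace.re / T) = a / T := by
    simp_rw [← Finset.sum_div]
    congr 1
    calc ∑ x : Ω, ∑ y : Ω, (S * (O x * (O y)ᴴ) * S * (O x * (O y)ᴴ)ᴴ).trace.re
        = (∑ x : Ω, ∑ y : Ω, (S * (O x * (O y)ᴴ) * S * (O x * (O y)ᴴ)ᴴ).trace).re := by
          simp [Complex.re_sum]
      _ = a := by rw [htr2, ha]
  have e1 : ∑ x : Ω, ((S * O x * S * (O x)ᴴ).trace.re / T) = b / T := by
    rw [← Finset.sum_div]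
    congr 1
    calc ∑ x : Ω, (S * O x * S * (O x)ᴴ).trace.re
        = (∑ x : Ω, (S * O x * S * (O x)ᴴ).trace).re := by simp [Complex.re_sum]
      _ = b := by rw [htr1, hb]
  rw [e2, e1, ge_iff_le]
  calc ((1 : ℝ) / N * (b / T)) ^ 2 = b ^ 2 * (1 / (N ^ 2 * T ^ 2)) := by
        ring
    _ ≤ (a * T) * (1 / (N ^ 2 * T ^ 2)) := by
        apply mul_le_mul_of_nonneg_right hcs (by positivity)
    _ = (1 : ℝ) / N ^ 2 * (a / T) := by
        rw [hT] at hTpos ⊢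
        field_simp
end
end

section
/- The connected fidelity matrix is not positive semidefinite in general: let ρ := (1/2)·1 be the maximally mixed density matrix on ℂ², and let O₁ := |0⟩⟨0|, O₂ := |+⟩⟨+|, O₃ := |1⟩⟨1|, where |0⟩, |1⟩ is the standard basis and |+⟩ := (|0⟩ + |1⟩)/√2. Then the 3×3 matrix F_c with entries [F_c]_{i,j} := F(ρ, (O_i O_j†) ρ (O_i O_j†)†) − F(ρ, O_i ρ O_i†) · F(ρ, O_j ρ O_j†) equals (1/4) · [[1, √2−1, −1], [√2−1, 1, √2−1], [−1, √2−1, 1]], and for the real vector v = (1, −√2, 1) one has vᵀ F_c v = −(√2−1)²/2 < 0; in particular F_c is not positive semidefinite. -/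
noncomputable section

open scoped Matrix Kronecker ComplexOrder

/-- The maximally mixed state on ℂ². -/
noncomputable def rhoMix : Matrix (Fin 2) (Fin 2) ℂ := ((1 : ℂ) / 2) • 1

/-- The three projectors `|0⟩⟨0|`, `|+⟩⟨+|`, `|1⟩⟨1|`. -/
noncomputable def Ofam : Fin 3 → Matrix (Fin 2) (Fin 2) ℂ :=
  ![!![1, 0; 0, 0], ((1 : ℂ) / 2) • !![1, 1; 1, 1], !![0, 0; 0, 1]]

/-- The connected fidelity matrix of `rhoMix` with respect to the family `Ofam`. -/
noncomputable def Fc : Matrix (Fin 3) (Fin 3) ℝ :=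
  Matrix.of fun i j =>
    fidelity rhoMix ((Ofam i * (Ofam j)ᴴ) * rhoMix * (Ofam i * (Ofam j)ᴴ)ᴴ) -
      fidelity rhoMix (Ofam i * rhoMix * (Ofam i)ᴴ) *
        fidelity rhoMix (Ofam j * rhoMix * (Ofam j)ᴴ)


open scoped MatrixOrder in
lemma matSqrt_eq {n : Type*} [Fintype n] [DecidableEq n] {M S : Matrix n n ℂ}
    (hS : S.PosSemidef) (h : S * S = M) : matSqrt M = S := by
  have hM : M.PosSemidef := by
    rw [← h]; nth_rewrite 1 [← hS.1]
    exact Matrix.posSemidef_conjTranspose_mul_self S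
  rw [matSqrt, dif_pos hM]
  have key : CFC.sqrt M = S := CFC.sqrt_unique h hS.nonneg
  rw [← key, CFC.sqrt_eq_real_sqrt M hM.nonneg, cfcₙ_eq_cfc, hM.1.cfc_eq,
    Matrix.IsHermitian.cfc]
  simp [Unitary.conjStarAlgAut_apply, Function.comp_def, Matrix.mul_assoc]

lemma matSqrt_smul_proj (c : ℝ) (hc : 0 ≤ c) {n : Type*} [Fintype n] [DecidableEq n]
    (P : Matrix n n ℂ) (hP : Pᴴ = P) (hP2 : P * P = P) :
    matSqrt ((c : ℂ) • P) = ((Real.sqrt c : ℂ)) • P := by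
  apply matSqrt_eq
  · have : ((Real.sqrt c : ℂ)) • P = ((Real.sqrt (Real.sqrt c) : ℂ) • P)ᴴ *
        ((Real.sqrt (Real.sqrt c) : ℂ) • P) := by
      rw [Matrix.conjTranspose_smul, hP, Matrix.smul_mul, Matrix.mul_smul, hP2, smul_smul]
      congr 1
      rw [Complex.star_def, Complex.conj_ofReal, ← Complex.ofReal_mul,
        Real.mul_self_sqrt (Real.sqrt_nonneg c)]
    rw [this]
    exact Matrix.posSemidef_conjTranspose_mul_self _
  · rw [Matrix.smul_mul, Matrix.mul_smul, hP2, smul_smul, ← Complex.ofReal_mul,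
      Real.mul_self_sqrt hc]

lemma matSqrt_rhoMix : matSqrt rhoMix = ((Real.sqrt (1/2) : ℂ)) • 1 := by
  have h : rhoMix = (((1:ℝ)/2 : ℝ) : ℂ) • (1 : Matrix (Fin 2) (Fin 2) ℂ) := by
    rw [rhoMix]; norm_num
  rw [h, matSqrt_smul_proj (1/2) (by norm_num) 1 (by simp) (by simp)]

lemma fid_eq (σ : Matrix (Fin 2) (Fin 2) ℂ) (c : ℝ) (hc : 0 ≤ c)
    (P : Matrix (Fin 2) (Fin 2) ℂ) (hP : Pᴴ = P) (hP2 : P * P = P)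
    (hσ : σ = (c : ℂ) • P) :
    fidelity rhoMix σ = Real.sqrt (c/2) * P.trace.re := by
  rw [fidelity, matSqrt_rhoMix, hσ]
  have h1 : ((Real.sqrt (1/2) : ℂ)) • (1 : Matrix (Fin 2) (Fin 2) ℂ) * ((c : ℂ) • P) *
      ((Real.sqrt (1/2) : ℂ)) • 1 = ((c/2 : ℝ) : ℂ) • P := by
    rw [Matrix.smul_mul, Matrix.mul_smul, Matrix.smul_mul, Matrix.mul_smul, one_mul, mul_one,
      smul_smul, smul_smul]
    congr 1
    push_cast
    rw [← Complex.ofReal_mul, Real.mul_self_sqrt (by norm_num)]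
    push_cast; ring
  rw [h1, matSqrt_smul_proj (c/2) (by positivity) P hP hP2, Matrix.trace_smul, smul_eq_mul]
  simp [Complex.mul_re]

def P1 : Matrix (Fin 2) (Fin 2) ℂ := !![1, 0; 0, 0]
def P2 : Matrix (Fin 2) (Fin 2) ℂ := !![1/2, 1/2; 1/2, 1/2]
def P3 : Matrix (Fin 2) (Fin 2) ℂ := !![0, 0; 0, 1]

lemma P1H : P1ᴴ = P1 := by ext i j; fin_cases i <;> fin_cases j <;> simp [P1]
lemma P2H : P2ᴴ = P2 := by
  ext i j; fin_cases i <;> fin_cases j <;> simp [P2]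
lemma P3H : P3ᴴ = P3 := by ext i j; fin_cases i <;> fin_cases j <;> simp [P3]
lemma P1sq : P1 * P1 = P1 := by
  ext i j; fin_cases i <;> fin_cases j <;> simp [P1, Matrix.mul_apply, Fin.sum_univ_succ]
lemma P2sq : P2 * P2 = P2 := by
  ext i j; fin_cases i <;> fin_cases j <;>
    simp [P2, Matrix.mul_apply, Fin.sum_univ_succ] <;> norm_num
lemma P3sq : P3 * P3 = P3 := by
  ext i j; fin_cases i <;> fin_cases j <;> simp [P3, Matrix.mul_apply, Fin.sum_univ_succ]
lemma P1tr : P1.trace.re = 1 := by simp [P1, Matrix.trace_fin_two]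
lemma P2tr : P2.trace.re = 1 := by norm_num [P2, Matrix.trace_fin_two]
lemma P3tr : P3.trace.re = 1 := by simp [P3, Matrix.trace_fin_two]

lemma sqrt_quarter : Real.sqrt (1/4) = 1/2 := by
  rw [show (1/4 : ℝ) = (1/2)^2 by norm_num, Real.sqrt_sq (by norm_num)]

lemma sqrt_eighth : Real.sqrt (1/8) = Real.sqrt 2 / 4 := by
  rw [show (1/8 : ℝ) = (Real.sqrt 2 / 4)^2 by
    rw [div_pow, Real.sq_sqrt (by norm_num)]; norm_num,
    Real.sqrt_sq (by positivity)]

lemma fD0 : fidelity rhoMix (Ofam 0 * rhoMix * (Ofam 0)ᴴ) = 1/2 := by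
  rw [fid_eq _ (1/2) (by norm_num) P1 P1H P1sq (by
    ext i j; fin_cases i <;> fin_cases j <;>
      norm_num [Ofam, rhoMix, P1, P2, P3, Matrix.mul_apply, Matrix.conjTranspose_apply, Fin.sum_univ_succ, Matrix.one_apply, Matrix.vecMul, dotProduct, Matrix.vecHead, Matrix.vecTail, map_div₀, map_ofNat]), P1tr]
  rw [show (1/2:ℝ)/2 = 1/4 by norm_num, sqrt_quarter]; norm_num

lemma fD1 : fidelity rhoMix (Ofam 1 * rhoMix * (Ofam 1)ᴴ) = 1/2 := by
  rw [fid_eq _ (1/2) (by norm_num) P2 P2H P2sq (by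
    ext i j; fin_cases i <;> fin_cases j <;>
      norm_num [Ofam, rhoMix, P1, P2, P3, Matrix.mul_apply, Matrix.conjTranspose_apply, Fin.sum_univ_succ, Matrix.one_apply, Matrix.vecMul, dotProduct, Matrix.vecHead, Matrix.vecTail, map_div₀, map_ofNat]), P2tr]
  rw [show (1/2:ℝ)/2 = 1/4 by norm_num, sqrt_quarter]; norm_num

lemma fD2 : fidelity rhoMix (Ofam 2 * rhoMix * (Ofam 2)ᴴ) = 1/2 := by
  rw [fid_eq _ (1/2) (by norm_num) P3 P3H P3sq (by
    ext i j; fin_cases i <;> fin_cases j <;>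
      norm_num [Ofam, rhoMix, P1, P2, P3, Matrix.mul_apply, Matrix.conjTranspose_apply, Fin.sum_univ_succ, Matrix.one_apply, Matrix.vecMul, dotProduct, Matrix.vecHead, Matrix.vecTail, Matrix.cons_val_two, map_div₀, map_ofNat]), P3tr]
  rw [show (1/2:ℝ)/2 = 1/4 by norm_num, sqrt_quarter]; norm_num

lemma fC00 : fidelity rhoMix ((Ofam 0 * (Ofam 0)ᴴ) * rhoMix * (Ofam 0 * (Ofam 0)ᴴ)ᴴ) = 1/2 := by
  rw [fid_eq _ (1/2) (by norm_num) P1 P1H P1sq (by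
    ext i j; fin_cases i <;> fin_cases j <;>
      norm_num [Ofam, rhoMix, P1, P2, P3, Matrix.mul_apply, Matrix.conjTranspose_apply, Fin.sum_univ_succ, Matrix.one_apply, Matrix.vecMul, dotProduct, Matrix.vecHead, Matrix.vecTail, map_div₀, map_ofNat]), P1tr]
  rw [show (1/2:ℝ)/2 = 1/4 by norm_num, sqrt_quarter]; norm_num

lemma fC11 : fidelity rhoMix ((Ofam 1 * (Ofam 1)ᴴ) * rhoMix * (Ofam 1 * (Ofam 1)ᴴ)ᴴ) = 1/2 := by
  rw [fid_eq _ (1/2) (by norm_num) P2 P2H P2sq (by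
    ext i j; fin_cases i <;> fin_cases j <;>
      norm_num [Ofam, rhoMix, P1, P2, P3, Matrix.mul_apply, Matrix.conjTranspose_apply, Fin.sum_univ_succ, Matrix.one_apply, Matrix.vecMul, dotProduct, Matrix.vecHead, Matrix.vecTail, map_div₀, map_ofNat]), P2tr]
  rw [show (1/2:ℝ)/2 = 1/4 by norm_num, sqrt_quarter]; norm_num

lemma fC22 : fidelity rhoMix ((Ofam 2 * (Ofam 2)ᴴ) * rhoMix * (Ofam 2 * (Ofam 2)ᴴ)ᴴ) = 1/2 := by
  rw [fid_eq _ (1/2) (by norm_num) P3 P3H P3sq (by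
    ext i j; fin_cases i <;> fin_cases j <;>
      norm_num [Ofam, rhoMix, P1, P2, P3, Matrix.mul_apply, Matrix.conjTranspose_apply, Fin.sum_univ_succ, Matrix.one_apply, Matrix.vecMul, dotProduct, Matrix.vecHead, Matrix.vecTail, Matrix.cons_val_two, map_div₀, map_ofNat]), P3tr]
  rw [show (1/2:ℝ)/2 = 1/4 by norm_num, sqrt_quarter]; norm_num

lemma fC01 : fidelity rhoMix ((Ofam 0 * (Ofam 1)ᴴ) * rhoMix * (Ofam 0 * (Ofam 1)ᴴ)ᴴ) = Real.sqrt 2 / 4 := by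
  rw [fid_eq _ (1/4) (by norm_num) P1 P1H P1sq (by
    ext i j; fin_cases i <;> fin_cases j <;>
      norm_num [Ofam, rhoMix, P1, P2, P3, Matrix.mul_apply, Matrix.conjTranspose_apply, Fin.sum_univ_succ, Matrix.one_apply, Matrix.vecMul, dotProduct, Matrix.vecHead, Matrix.vecTail, map_div₀, map_ofNat]), P1tr]
  rw [show (1/4:ℝ)/2 = 1/8 by norm_num, sqrt_eighth]; norm_num

lemma fC10 : fidelity rhoMix ((Ofam 1 * (Ofam 0)ᴴ) * rhoMix * (Ofam 1 * (Ofam 0)ᴴ)ᴴ) = Real.sqrt 2 / 4 := by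
  rw [fid_eq _ (1/4) (by norm_num) P2 P2H P2sq (by
    ext i j; fin_cases i <;> fin_cases j <;>
      norm_num [Ofam, rhoMix, P1, P2, P3, Matrix.mul_apply, Matrix.conjTranspose_apply, Fin.sum_univ_succ, Matrix.one_apply, Matrix.vecMul, dotProduct, Matrix.vecHead, Matrix.vecTail, map_div₀, map_ofNat]), P2tr]
  rw [show (1/4:ℝ)/2 = 1/8 by norm_num, sqrt_eighth]; norm_num

lemma fC12 : fidelity rhoMix ((Ofam 1 * (Ofam 2)ᴴ) * rhoMix * (Ofam 1 * (Ofam 2)ᴴ)ᴴ) = Real.sqrt 2 / 4 := by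
  rw [fid_eq _ (1/4) (by norm_num) P2 P2H P2sq (by
    ext i j; fin_cases i <;> fin_cases j <;>
      norm_num [Ofam, rhoMix, P1, P2, P3, Matrix.mul_apply, Matrix.conjTranspose_apply, Fin.sum_univ_succ, Matrix.one_apply, Matrix.vecMul, dotProduct, Matrix.vecHead, Matrix.vecTail, Matrix.cons_val_two, map_div₀, map_ofNat]), P2tr]
  rw [show (1/4:ℝ)/2 = 1/8 by norm_num, sqrt_eighth]; norm_num

lemma fC21 : fidelity rhoMix ((Ofam 2 * (Ofam 1)ᴴ) * rhoMix * (Ofam 2 * (Ofam 1)ᴴ)ᴴ) = Real.sqrt 2 / 4 := by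
  rw [fid_eq _ (1/4) (by norm_num) P3 P3H P3sq (by
    ext i j; fin_cases i <;> fin_cases j <;>
      norm_num [Ofam, rhoMix, P1, P2, P3, Matrix.mul_apply, Matrix.conjTranspose_apply, Fin.sum_univ_succ, Matrix.one_apply, Matrix.vecMul, dotProduct, Matrix.vecHead, Matrix.vecTail, Matrix.cons_val_two, map_div₀, map_ofNat]), P3tr]
  rw [show (1/4:ℝ)/2 = 1/8 by norm_num, sqrt_eighth]; norm_num

lemma fC02 : fidelity rhoMix ((Ofam 0 * (Ofam 2)ᴴ) * rhoMix * (Ofam 0 * (Ofam 2)ᴴ)ᴴ) = 0 := by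
  rw [fid_eq _ 0 le_rfl 0 (by simp) (by simp) (by
    ext i j; fin_cases i <;> fin_cases j <;>
      norm_num [Ofam, rhoMix, P1, P2, P3, Matrix.mul_apply, Matrix.conjTranspose_apply, Fin.sum_univ_succ, Matrix.one_apply, Matrix.vecMul, dotProduct, Matrix.vecHead, Matrix.vecTail, Matrix.cons_val_two, map_div₀, map_ofNat])]
  simp

lemma fC20 : fidelity rhoMix ((Ofam 2 * (Ofam 0)ᴴ) * rhoMix * (Ofam 2 * (Ofam 0)ᴴ)ᴴ) = 0 := by
  rw [fid_eq _ 0 le_rfl 0 (by simp) (by simp) (by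
    ext i j; fin_cases i <;> fin_cases j <;>
      norm_num [Ofam, rhoMix, P1, P2, P3, Matrix.mul_apply, Matrix.conjTranspose_apply, Fin.sum_univ_succ, Matrix.one_apply, Matrix.vecMul, dotProduct, Matrix.vecHead, Matrix.vecTail, Matrix.cons_val_two, map_div₀, map_ofNat])]
  simp


/-- **The connected fidelity matrix is not positive semidefinite in general**
(Appendix B counterexample). -/
theorem connected_fidelity_not_posSemidef :
    Fc = ((1 : ℝ) / 4) •
        !![1, Real.sqrt 2 - 1, -1;
           Real.sqrt 2 - 1, 1, Real.sqrt 2 - 1;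
           -1, Real.sqrt 2 - 1, 1] ∧
    (![1, -Real.sqrt 2, 1] ⬝ᵥ (Fc *ᵥ ![1, -Real.sqrt 2, 1])) =
      -(Real.sqrt 2 - 1) ^ 2 / 2 ∧
    -(Real.sqrt 2 - 1) ^ 2 / 2 < 0 ∧
    ¬ Fc.PosSemidef := by
  have h2 : Real.sqrt 2 ^ 2 = 2 := Real.sq_sqrt (by norm_num)
  have h1 : Fc = ((1 : ℝ) / 4) •
      !![1, Real.sqrt 2 - 1, -1;
         Real.sqrt 2 - 1, 1, Real.sqrt 2 - 1;
         -1, Real.sqrt 2 - 1, 1] := by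
    ext i j
    fin_cases i <;> fin_cases j <;>
      simp only [Fin.zero_eta, Fin.mk_one, Fin.reduceFinMk, Fc, Matrix.of_apply,
        fD0, fD1, fD2, fC00, fC01, fC02, fC10, fC11, fC12,
        fC20, fC21, fC22, Matrix.smul_apply, Matrix.cons_val_zero,
        Matrix.cons_val_one, Matrix.cons_val_succ, Matrix.head_cons,
        smul_eq_mul] <;>
      simp [Matrix.cons_val_succ] <;> ring_nf
  have hpart2 : (![1, -Real.sqrt 2, 1] ⬝ᵥ (Fc *ᵥ ![1, -Real.sqrt 2, 1])) =
      -(Real.sqrt 2 - 1) ^ 2 / 2 := by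
    rw [h1]
    simp only [dotProduct, Matrix.mulVec, Matrix.smul_apply, Fin.sum_univ_succ,
      Fin.sum_univ_zero, Matrix.cons_val_zero, Matrix.cons_val_one, Matrix.cons_val_succ,
      Matrix.head_cons, smul_eq_mul, add_zero, Matrix.cons_val', Matrix.empty_val',
      Matrix.cons_val_fin_one, Matrix.head_fin_const, Matrix.of_apply]
    linear_combination -h2 / 4
  have hs : 1 < Real.sqrt 2 := by
    rw [show (1:ℝ) = Real.sqrt 1 by simp]
    exact Real.sqrt_lt_sqrt (by norm_num) (by norm_num)
  have hpart3 : -(Real.sqrt 2 - 1) ^ 2 / 2 < 0 := by nlinarith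
  refine ⟨h1, hpart2, hpart3, ?_⟩
  intro hpsd
  have h4 := hpsd.dotProduct_mulVec_nonneg ![1, -Real.sqrt 2, 1]
  have hstar : star ![1, -Real.sqrt 2, 1] = ![(1:ℝ), -Real.sqrt 2, 1] := by
    ext i; fin_cases i <;> simp
  rw [hstar, hpart2] at h4
  linarith
end
end
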